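/- Let d, n₁, n₂ be natural numbers, let w₁, …, w_d ∈ ℂ^{n₁} be column vectors, and let r₁, …, r_d ∈ ℂ^{1×n₂} be row vectors. Then the maximum, over all parameter vectors p = (p₁, …, p_d) ∈ ℂ^d, of rank(∑_{i=1}^d p_i · w_i · r_i) equals the maximum cardinality of a subset I ⊆ {1, …, d} such that the family (w_i)_{i ∈ I} is linearly independent and the family (r_i)_{i ∈ I} is linearly independent. -/

import Mathlib

open Matrix Submodule Module

/-- rows-in-span half lemma -/
lemma gr_half {ρ d : ℕ} (v z : Fin d → Fin ρ → ℂ) (s : Finset (Fin d))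
    (hA : IsUnit (∑ i ∈ s, Matrix.vecMulVec (v i) (z i))) :
    ρ ≤ s.card ∧ (s.card ≤ ρ → LinearIndependent ℂ (fun i : s => z i)) := by
  classical
  set A := ∑ i ∈ s, Matrix.vecMulVec (v i) (z i) with hAdef
  have hrows : LinearIndependent ℂ (fun a => A a) :=
    Matrix.linearIndependent_rows_iff_isUnit.mpr hA
  set fam : s → (Fin ρ → ℂ) := fun i => z i with hfam
  set V : Submodule ℂ (Fin ρ → ℂ) := Submodule.span ℂ (Set.range fam) with hV
  have hmem : ∀ a, A a ∈ V := by
    intro a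
    have : A a = ∑ i ∈ s, v i a • z i := by
      funext b
      simp [hAdef, Matrix.sum_apply, Matrix.vecMulVec_apply, smul_eq_mul]
    rw [this]
    refine Submodule.sum_mem _ fun i hi => Submodule.smul_mem _ _ ?_
    exact Submodule.subset_span ⟨⟨i, hi⟩, rfl⟩
  have hA' : LinearIndependent ℂ (fun a : Fin ρ => (⟨A a, hmem a⟩ : V)) := by
    apply LinearIndependent.of_comp V.subtype
    exact hrows
  have h1 : ρ ≤ finrank ℂ V := by
    simpa using hA'.fintype_card_le_finrank
  have h2 : finrank ℂ V ≤ s.card := by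
    have := finrank_range_le_card (R := ℂ) fam
    simpa [Set.finrank, Fintype.card_coe] using this
  refine ⟨le_trans h1 h2, fun hle => ?_⟩
  rw [linearIndependent_iff_card_eq_finrank_span]
  have : finrank ℂ V = ρ := le_antisymm (le_trans h2 hle) h1
  simp [Set.finrank, ← hV, this, Fintype.card_coe]
  rw [← hV]
  omega

lemma gr_trace_mul_vecMulVec {ρ : ℕ} (B : Matrix (Fin ρ) (Fin ρ) ℂ) (v z : Fin ρ → ℂ) :
    Matrix.trace (B * Matrix.vecMulVec v z) = z ⬝ᵥ (B *ᵥ v) := by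
  simp only [Matrix.trace, Matrix.diag, Matrix.mul_apply, Matrix.vecMulVec_apply,
    dotProduct, Matrix.mulVec, Finset.mul_sum]
  exact Finset.sum_congr rfl fun a _ => Finset.sum_congr rfl fun b _ => by ring

lemma gr_key {ρ : ℕ} (A : Matrix (Fin ρ) (Fin ρ) ℂ) (hAdet : IsUnit A.det)
    (v z : Fin ρ → ℂ) (h : ¬ IsUnit (A - Matrix.vecMulVec v z)) :
    z ⬝ᵥ (A⁻¹ *ᵥ v) = 1 := by
  have hAU : A * A⁻¹ = 1 := Matrix.mul_nonsing_inv A hAdet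
  have hcol : A * Matrix.replicateCol (Fin 1) (A⁻¹ *ᵥ (-v)) = Matrix.replicateCol (Fin 1) (-v) := by
    rw [← Matrix.replicateCol_mulVec, Matrix.mulVec_mulVec, hAU, Matrix.one_mulVec]
  have h1 : Matrix.replicateCol (Fin 1) (-v) * Matrix.replicateRow (Fin 1) z = -(Matrix.vecMulVec v z) := by
    rw [Matrix.vecMulVec_eq (Fin 1)]
    funext a b
    simp [Matrix.vecMulVec_apply, Matrix.mul_apply]
  have hfact : A - Matrix.vecMulVec v z
      = A * (1 + Matrix.replicateCol (Fin 1) (A⁻¹ *ᵥ (-v)) * Matrix.replicateRow (Fin 1) z) := by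
    rw [Matrix.mul_add, Matrix.mul_one, ← Matrix.mul_assoc, hcol, h1, ← sub_eq_add_neg]
  have hd : (A - Matrix.vecMulVec v z).det = A.det * (1 - z ⬝ᵥ (A⁻¹ *ᵥ v)) := by
    rw [hfact, Matrix.det_mul, Matrix.det_one_add_mul_comm]
    congr 1
    rw [Matrix.det_unique]
    simp [Matrix.mulVec_neg, sub_eq_add_neg]
  have hdet0 : (A - Matrix.vecMulVec v z).det = 0 := by
    by_contra h0
    exact h ((Matrix.isUnit_iff_isUnit_det _).mpr (isUnit_iff_ne_zero.mpr h0))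
  rw [hd] at hdet0
  rcases mul_eq_zero.mp hdet0 with hh | hh
  · exact absurd hh hAdet.ne_zero
  · exact (sub_eq_zero.mp hh).symm

/-- If the sum over `s` is invertible and `s.card > ρ`, some element can be deleted. -/
lemma gr_delete {ρ d : ℕ} (v z : Fin d → Fin ρ → ℂ) (s : Finset (Fin d))
    (hA : IsUnit (∑ i ∈ s, Matrix.vecMulVec (v i) (z i))) (hcard : ρ < s.card) :
    ∃ k ∈ s, IsUnit (∑ i ∈ s.erase k, Matrix.vecMulVec (v i) (z i)) := by
  classical
  by_contra hcon
  push_neg at hcon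
  set A := ∑ i ∈ s, Matrix.vecMulVec (v i) (z i) with hAdef
  have hAdet : IsUnit A.det := (Matrix.isUnit_iff_isUnit_det A).mp hA
  have key : ∀ k ∈ s, z k ⬝ᵥ (A⁻¹ *ᵥ v k) = 1 := by
    intro k hk
    refine gr_key A hAdet (v k) (z k) ?_
    have herase : ∑ i ∈ s.erase k, Matrix.vecMulVec (v i) (z i)
        = A - Matrix.vecMulVec (v k) (z k) := by
      rw [hAdef, ← Finset.add_sum_erase _ _ hk]
      abel
    rw [← herase]
    exact hcon k hk
  have hsum1 : ∑ k ∈ s, z k ⬝ᵥ (A⁻¹ *ᵥ v k) = (s.card : ℂ) := by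
    rw [Finset.sum_congr rfl key]
    simp
  have hsum2 : ∑ k ∈ s, z k ⬝ᵥ (A⁻¹ *ᵥ v k) = (ρ : ℂ) := by
    have h2 : A⁻¹ * A = ∑ k ∈ s, A⁻¹ * Matrix.vecMulVec (v k) (z k) := by
      conv_lhs => rw [hAdef]
      rw [Finset.mul_sum]
    have h3 : Matrix.trace (A⁻¹ * A) = ∑ k ∈ s, z k ⬝ᵥ (A⁻¹ *ᵥ v k) := by
      rw [h2, Matrix.trace_sum]
      exact Finset.sum_congr rfl fun k _ => gr_trace_mul_vecMulVec _ _ _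
    rw [← h3, Matrix.nonsing_inv_mul A hAdet, Matrix.trace_one]
    simp
  rw [hsum1] at hsum2
  have : s.card = ρ := Nat.cast_injective hsum2
  omega

lemma gr_core {ρ d : ℕ} (v z : Fin d → Fin ρ → ℂ) (s : Finset (Fin d))
    (hA : IsUnit (∑ i ∈ s, Matrix.vecMulVec (v i) (z i))) :
    ∃ I : Finset (Fin d), I ⊆ s ∧ I.card = ρ ∧
      LinearIndependent ℂ (fun i : I => v i) ∧ LinearIndependent ℂ (fun i : I => z i) := by
  classical
  induction s using Finset.strongInductionOn with
  | _ s ih =>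
    have hhalf := gr_half v z s hA
    rcases eq_or_lt_of_le hhalf.1 with heq | hlt
    · refine ⟨s, Finset.Subset.refl s, heq.symm, ?_, hhalf.2 heq.ge⟩
      have hAT : IsUnit (∑ i ∈ s, Matrix.vecMulVec (z i) (v i)) := by
        have : (∑ i ∈ s, Matrix.vecMulVec (v i) (z i))ᵀ
            = ∑ i ∈ s, Matrix.vecMulVec (z i) (v i) := by
          rw [Matrix.transpose_sum]
          exact Finset.sum_congr rfl fun i _ => by
            funext a b; simp [Matrix.vecMulVec_apply, mul_comm]
        rw [← this, Matrix.isUnit_transpose]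
        exact hA
      exact (gr_half z v s hAT).2 heq.ge
    · obtain ⟨k, hk, hUnit⟩ := gr_delete v z s hA hlt
      obtain ⟨I, hIsub, hcard, hv, hz⟩ := ih (s.erase k) (Finset.erase_ssubset hk) hUnit
      exact ⟨I, hIsub.trans (Finset.erase_subset _ _), hcard, hv, hz⟩

/-- From a matrix of rank ≥ t, we can select t linearly independent columns. -/
lemma gr_cols {m n t : ℕ} (M : Matrix (Fin m) (Fin n) ℂ) (h : M.rank = t) :
    ∃ g : Fin t → Fin n, LinearIndependent ℂ (fun a => Mᵀ (g a)) := by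
  classical
  obtain ⟨b, hbsub, hbspan, hbindep⟩ := exists_linearIndependent ℂ (Set.range Mᵀ)
  haveI : Fintype b := ((Set.finite_range Mᵀ).subset hbsub).fintype
  have hcard : Fintype.card b = t := by
    have h1 : finrank ℂ (Submodule.span ℂ b) = Fintype.card b := by
      have := finrank_span_eq_card (R := ℂ) hbindep
      rwa [Subtype.range_coe] at this
    have h2 : finrank ℂ (Submodule.span ℂ b) = t := by
      rw [hbspan]; exact (Matrix.rank_eq_finrank_span_cols M).symm.trans h
    omega
  have e : Fin t ≃ b := (Fintype.equivFinOfCardEq hcard).symm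
  have hsel : ∀ a : Fin t, ∃ j : Fin n, Mᵀ j = (e a : Fin m → ℂ) := fun a => hbsub (e a).2
  choose g hg using hsel
  refine ⟨g, ?_⟩
  have : (fun a => Mᵀ (g a)) = (fun x : b => (x : Fin m → ℂ)) ∘ e := by
    funext a; exact hg a
  rw [this]
  exact hbindep.comp e e.injective

/-- A matrix whose `t` columns are linearly independent has an invertible `t × t` submatrix. -/
lemma gr_rows {m t : ℕ} (N : Matrix (Fin m) (Fin t) ℂ)
    (h : LinearIndependent ℂ (fun j => Nᵀ j)) :
    ∃ f : Fin t → Fin m, IsUnit (N.submatrix f id) := by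
  have hrank : Nᵀ.rank = t := by
    rw [Matrix.rank_transpose, Matrix.rank_eq_finrank_span_cols]
    exact (finrank_span_eq_card h).trans (Fintype.card_fin t)
  obtain ⟨f, hf⟩ := gr_cols Nᵀ hrank
  refine ⟨f, ?_⟩
  rw [← Matrix.linearIndependent_rows_iff_isUnit]
  have : (fun a => (N.submatrix f id) a) = fun a => Nᵀᵀ (f a) := by
    funext a; rfl
  exact hf

/-- Rank of an arbitrary submatrix is at most the rank. -/
lemma gr_rank_submatrix_le {m n k l : ℕ} (A : Matrix (Fin m) (Fin n) ℂ)
    (f : Fin k → Fin m) (g : Fin l → Fin n) :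
    (A.submatrix f g).rank ≤ A.rank := by
  rw [Matrix.rank_eq_finrank_span_cols, Matrix.rank_eq_finrank_span_cols]
  have hsub : Set.range (A.submatrix f g)ᵀ ⊆
      (LinearMap.funLeft ℂ ℂ f) '' (Set.range Aᵀ) := by
    rintro _ ⟨b, rfl⟩
    exact ⟨Aᵀ (g b), ⟨g b, rfl⟩, rfl⟩
  have hle : Submodule.span ℂ (Set.range (A.submatrix f g)ᵀ) ≤
      (Submodule.span ℂ (Set.range Aᵀ)).map (LinearMap.funLeft ℂ ℂ f) := by
    rw [← Submodule.span_image]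
    exact Submodule.span_mono hsub
  calc finrank ℂ (Submodule.span ℂ (Set.range (A.submatrix f g)ᵀ))
      ≤ finrank ℂ ((Submodule.span ℂ (Set.range Aᵀ)).map (LinearMap.funLeft ℂ ℂ f)) :=
        Submodule.finrank_mono hle
    _ ≤ finrank ℂ (Submodule.span ℂ (Set.range Aᵀ)) := Submodule.finrank_map_le _ _

/-- An invertible submatrix extracted from any matrix, of size its rank. -/
lemma gr_extract {m n : ℕ} (M : Matrix (Fin m) (Fin n) ℂ) :
    ∃ (f : Fin M.rank → Fin m) (g : Fin M.rank → Fin n), IsUnit (M.submatrix f g) := by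
  obtain ⟨g, hg⟩ := gr_cols M rfl
  obtain ⟨f, hf⟩ := gr_rows (M.submatrix id g) (by
    have : (fun j => (M.submatrix id g)ᵀ j) = fun j => Mᵀ (g j) := by funext j; rfl
    rw [this]; exact hg)
  exact ⟨f, g, hf⟩

lemma gr_unscale {α : Type*} [Fintype α] {n k : ℕ} (p : α → ℂ) (w : α → Fin n → ℂ)
    (f : Fin k → Fin n)
    (h : LinearIndependent ℂ (fun i : α => fun a => p i * w i (f a))) :
    LinearIndependent ℂ w := by
  have hp : ∀ j, p j ≠ 0 := by
    intro j hj
    have hzero : (fun a => p j * w j (f a)) = (0 : Fin k → ℂ) := by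
      funext a; simp [hj]
    exact h.ne_zero j hzero
  rw [Fintype.linearIndependent_iff] at h ⊢
  intro c hc
  have hc' : ∑ i, (c i / p i) • (fun a => p i * w i (f a)) = (0 : Fin k → ℂ) := by
    funext a
    have := congrFun hc (f a)
    simp only [Finset.sum_apply, Pi.smul_apply, smul_eq_mul, Pi.zero_apply] at this ⊢
    rw [← this]
    refine Finset.sum_congr rfl fun i _ => ?_
    rw [div_mul_eq_mul_div, mul_comm (p i), ← mul_assoc, mul_div_assoc,
      div_self (hp i), mul_one]
  intro i
  have := h (fun i => c i / p i) hc' i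
  rw [div_eq_zero_iff] at this
  rcases this with h1 | h1
  · exact h1
  · exact absurd h1 (hp i)


/-- the generic rank (maximum over parameters) of ∑ pᵢ wᵢ rᵢ equals
the maximum cardinality of a jointly independent subset I ⊆ {1,…,d}. -/
theorem generic_rank_eq_max_jointly_independent (d n₁ n₂ : ℕ)
    (w : Fin d → Fin n₁ → ℂ) (r : Fin d → Fin n₂ → ℂ) :
    (⨆ p : Fin d → ℂ,
        (∑ i, p i • Matrix.vecMulVec (w i) (r i)).rank) =
      ⨆ I : {I : Finset (Fin d) //
        LinearIndependent ℂ (fun i : I => w i) ∧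
        LinearIndependent ℂ (fun i : I => r i)},
        (I : Finset (Fin d)).card := by
  classical
  haveI hne : Nonempty {I : Finset (Fin d) //
      LinearIndependent ℂ (fun i : I => w i) ∧
      LinearIndependent ℂ (fun i : I => r i)} := by
    refine ⟨⟨∅, ?_, ?_⟩⟩ <;>
    · haveI : IsEmpty ((∅ : Finset (Fin d)) : Type) := Finset.isEmpty_coe_sort.mpr rfl
      exact linearIndependent_empty_type
  have hbddR : BddAbove (Set.range fun I : {I : Finset (Fin d) //
      LinearIndependent ℂ (fun i : I => w i) ∧
      LinearIndependent ℂ (fun i : I => r i)} => (I : Finset (Fin d)).card) := by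
    refine ⟨d, ?_⟩
    rintro _ ⟨I, rfl⟩
    exact (Finset.card_le_univ _).trans (by simp)
  have hbddL : BddAbove (Set.range fun p : Fin d → ℂ =>
      (∑ i, p i • Matrix.vecMulVec (w i) (r i)).rank) := by
    refine ⟨n₂, ?_⟩
    rintro _ ⟨p, rfl⟩
    exact (Matrix.rank_le_card_width _).trans (by simp)
  apply le_antisymm
  · -- generic rank ≤ max jointly independent
    refine ciSup_le fun p => ?_
    set M := ∑ i, p i • Matrix.vecMulVec (w i) (r i) with hM
    obtain ⟨f, g, hU⟩ := gr_extract M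
    have hsub : M.submatrix f g
        = ∑ i : Fin d, Matrix.vecMulVec (fun a => p i * w i (f a)) (fun b => r i (g b)) := by
      funext a b
      simp only [Matrix.submatrix_apply, hM, Matrix.sum_apply, Matrix.vecMulVec_apply,
        Matrix.smul_apply, smul_eq_mul]
      exact Finset.sum_congr rfl fun i _ => by ring
    rw [hsub] at hU
    obtain ⟨I, -, hcard, hv, hz⟩ := gr_core _ _ Finset.univ hU
    have hw : LinearIndependent ℂ (fun i : I => w i) :=
      gr_unscale (fun i : I => p i) (fun i : I => w i) f hv
    have hr : LinearIndependent ℂ (fun i : I => r i) :=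
      LinearIndependent.of_comp (LinearMap.funLeft ℂ ℂ g) hz
    have : M.rank ≤ I.card := hcard.ge
    refine this.trans ?_
    exact le_ciSup hbddR ⟨I, hw, hr⟩
  · -- max jointly independent ≤ generic rank
    refine ciSup_le fun I => ?_
    obtain ⟨I, hw, hr⟩ := I
    set t := I.card with ht
    have e : Fin t ≃ I := I.equivFin.symm
    set W' : Matrix (Fin n₁) (Fin t) ℂ := Matrix.of fun a j => w (e j) a with hW'
    set Z' : Matrix (Fin n₂) (Fin t) ℂ := Matrix.of fun b j => r (e j) b with hZ'
    obtain ⟨f, hfU⟩ := gr_rows W' (hw.comp e e.injective)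
    obtain ⟨g, hgU⟩ := gr_rows Z' (hr.comp e e.injective)
    set p : Fin d → ℂ := fun i => if i ∈ I then 1 else 0 with hp
    set M := ∑ i, p i • Matrix.vecMulVec (w i) (r i) with hM
    have hprod : M.submatrix f g = (W'.submatrix f id) * (Z'.submatrix g id)ᵀ := by
      funext a b
      simp only [Matrix.submatrix_apply, hM, Matrix.sum_apply, Matrix.smul_apply,
        Matrix.vecMulVec_apply, smul_eq_mul, Matrix.mul_apply, Matrix.transpose_apply, hp,
        ite_mul, one_mul, zero_mul, hW', hZ', Matrix.of_apply, id]
      rw [Finset.sum_ite_mem, Finset.univ_inter, ← Finset.sum_coe_sort,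
        ← Equiv.sum_comp e (fun i : I => w i (f a) * r i (g b))]
    have hMU : IsUnit (M.submatrix f g) := by
      rw [hprod]
      exact hfU.mul ((Matrix.isUnit_transpose _).mpr hgU)
    have h1 : t = (M.submatrix f g).rank := by
      rw [Matrix.rank_of_isUnit _ hMU, Fintype.card_fin]
    have h2 : (M.submatrix f g).rank ≤ M.rank := gr_rank_submatrix_le M f g
    calc t = (M.submatrix f g).rank := h1
      _ ≤ M.rank := h2
      _ ≤ _ := le_ciSup hbddL p
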